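/- Fix an integer p ≥ 1 and H > 0. Let x_k, υ_k, x_{k+1} ∈ E, τ_k ∈ [0,1], set u_k = υ_k − x_k, y_k = x_k + τ_k u_k and r_k = ‖x_{k+1} − y_k‖, and let g be a subgradient of ψ at x_{k+1} such that: (a) ∇f(x_{k+1}) + g + H r_k^{p−1}(x_{k+1} − y_k) = 0, and (b) (τ − τ_k)⟨∇f(x_{k+1}) + g, u_k⟩ ≥ 0 for every τ ∈ [0,1]. Let A_k ≥ 0, B_k ∈ ℝ and Ψ_k : E → ℝ satisfy Ψ_k(x) ≥ A_k F(x_k) + B_k + (1/2)‖x − υ_k‖² for all x ∈ E. Set g_k = ‖∇f(x_{k+1}) + g‖, assume g_k > 0, let a_{k+1} > 0 satisfy a_{k+1}²/(A_k + a_{k+1}) = (1/H)^{1/p} g_k^{(1−p)/p}, set A_{k+1} = A_k + a_{k+1}, and define Ψ_{k+1}(x) = Ψ_k(x) + a_{k+1}(f(x_{k+1}) + ⟨∇f(x_{k+1}), x − x_{k+1}⟩ + ψ(x)). Then for every x ∈ E, Ψ_{k+1}(x) ≥ A_{k+1} F(x_{k+1}) + B_k + (1/2)(1/H)^{1/p}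 A_{k+1} g_k^{(p+1)/p}. -/

import Mathlib

set_option maxHeartbeats 1000000


open scoped RealInnerProductSpace

theorem grad_ineq_aux {E : Type*} [NormedAddCommGroup E] [InnerProductSpace ℝ E]
    [FiniteDimensional ℝ E]
    {f : E → ℝ} {G x : E} (hf : ConvexOn ℝ Set.univ f) (hd : HasGradientAt f G x) (y : E) :
    f x + ⟪G, y - x⟫ ≤ f y := by
  have hc : HasDerivAt (fun t : ℝ => x + t • (y - x)) (y - x) 0 := by
    simpa using ((hasDerivAt_id (0 : ℝ)).smul_const (y - x)).const_add x
  have hF := hasGradientAt_iff_hasFDerivAt.mp hd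
  have h0 : x + (0 : ℝ) • (y - x) = x := by simp
  have hφd : HasDerivAt (fun t : ℝ => f (x + t • (y - x))) ⟪G, y - x⟫ 0 := by
    have hF' : HasFDerivAt f (InnerProductSpace.toDual ℝ E G)
        ((fun t : ℝ => x + t • (y - x)) 0) := by simpa using hF
    have := hF'.comp_hasDerivAt 0 hc
    simpa [Function.comp_def, InnerProductSpace.toDual_apply_apply] using this
  have hφc : ConvexOn ℝ Set.univ (fun t : ℝ => f (x + t • (y - x))) := by
    have := hf.comp_affineMap (AffineMap.lineMap x y : ℝ →ᵃ[ℝ] E)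
    have heq : (f ∘ (AffineMap.lineMap x y : ℝ →ᵃ[ℝ] E))
        = fun t : ℝ => f (x + t • (y - x)) := by
      funext t
      simp only [Function.comp, AffineMap.lineMap_apply, vsub_eq_sub, vadd_eq_add]
      rw [add_comm]
    rw [heq] at this
    simpa using this
  have hslope := hφc.le_slope_of_hasDerivAt (Set.mem_univ 0) (Set.mem_univ 1) one_pos hφd
  rw [slope_def_field] at hslope
  simp at hslope
  linarith

theorem stmt_6 {E : Type*} [NormedAddCommGroup E] [InnerProductSpace ℝ E]
    [FiniteDimensional ℝ E]
    (f ψ : E → ℝ) (f' : E → E)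
    (hf : ConvexOn ℝ Set.univ f) (hψ : ConvexOn ℝ Set.univ ψ)
    (hf' : ∀ x, HasGradientAt f (f' x) x)
    (p : ℕ) (hp : 1 ≤ p) (H : ℝ) (hH : 0 < H)
    (xk vk xk1 : E) (τk : ℝ) (hτk : τk ∈ Set.Icc (0 : ℝ) 1)
    (g : E) (hg : ∀ y, ψ xk1 + ⟪g, y - xk1⟫ ≤ ψ y)
    (hopt : f' xk1 + g + (H * ‖xk1 - (xk + τk • (vk - xk))‖ ^ (p - 1)) •
        (xk1 - (xk + τk • (vk - xk))) = 0)
    (hτopt : ∀ τ ∈ Set.Icc (0 : ℝ) 1, (τ - τk) * ⟪f' xk1 + g, vk - xk⟫ ≥ 0)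
    (A B : ℝ) (hA : 0 ≤ A) (Ψk : E → ℝ)
    (hΨk : ∀ x, Ψk x ≥ A * (f xk + ψ xk) + B + (1 / 2) * ‖x - vk‖ ^ 2)
    (hgk : 0 < ‖f' xk1 + g‖)
    (a : ℝ) (ha : 0 < a)
    (haeq : a ^ 2 / (A + a) =
      (1 / H) ^ ((1 : ℝ) / p) * ‖f' xk1 + g‖ ^ ((1 - (p : ℝ)) / p))
    (Ψk1 : E → ℝ)
    (hΨk1 : ∀ x, Ψk1 x = Ψk x + a * (f xk1 + ⟪f' xk1, x - xk1⟫ + ψ x)) :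
    ∀ x, Ψk1 x ≥ (A + a) * (f xk1 + ψ xk1) + B +
      (1 / 2) * (1 / H) ^ ((1 : ℝ) / p) * (A + a) *
        ‖f' xk1 + g‖ ^ (((p : ℝ) + 1) / p) := by
  set u : E := vk - xk with hu_def
  set yk : E := xk + τk • u with hyk_def
  set s : E := f' xk1 + g with hs_def
  set rk : ℝ := ‖xk1 - yk‖ with hrk_def
  set gk : ℝ := ‖s‖ with hgk_def
  have hAa : 0 < A + a := by linarith
  have hrknn : 0 ≤ rk := norm_nonneg _
  have hcnn : 0 ≤ H * rk ^ (p - 1) := by positivity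
  have hs : s = -((H * rk ^ (p - 1)) • (xk1 - yk)) := eq_neg_of_add_eq_zero_left hopt
  have hgk_eq : gk = H * rk ^ p := by
    rw [hgk_def, hs, norm_neg, norm_smul, Real.norm_of_nonneg hcnn, ← hrk_def,
      mul_assoc, ← pow_succ]
    congr 2
    omega
  have hrkpos : 0 < rk := by
    rcases hrknn.lt_or_eq with h | h
    · exact h
    · exfalso
      have : gk = 0 := by rw [hgk_eq, ← h, zero_pow (by omega : p ≠ 0), mul_zero]
      linarith
  have hppos : (0 : ℝ) < (p : ℝ) := by exact_mod_cast Nat.pos_of_ne_zero (by omega)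
  have hrk_eq : rk = (gk / H) ^ ((p : ℝ))⁻¹ := by
    have h1 : rk ^ p = gk / H := by
      rw [hgk_eq]; field_simp
    rw [← Real.pow_rpow_inv_natCast hrknn (by omega : p ≠ 0), h1]
  have hK1 : gk * rk = (1 / H) ^ ((1 : ℝ) / p) * gk ^ (((p : ℝ) + 1) / p) := by
    have hexp : ((p : ℝ) + 1) / p = 1 + ((p : ℝ))⁻¹ := by field_simp
    rw [hrk_eq, Real.div_rpow hgk.le hH.le, hexp, Real.rpow_add hgk, Real.rpow_one,
      one_div, Real.inv_rpow hH.le, one_div]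
    field_simp
  have hK2 : a ^ 2 * gk ^ 2 = (A + a) * ((1 / H) ^ ((1 : ℝ) / p) * gk ^ (((p : ℝ) + 1) / p)) := by
    rw [div_eq_iff hAa.ne'] at haeq
    have h3 : gk ^ ((1 - (p : ℝ)) / p) * gk ^ (2 : ℕ) = gk ^ (((p : ℝ) + 1) / p) := by
      rw [← Real.rpow_natCast gk 2, ← Real.rpow_add hgk]
      congr 1
      field_simp
      ring
    calc a ^ 2 * gk ^ 2
        = (A + a) * ((1 / H) ^ ((1 : ℝ) / p) * (gk ^ ((1 - (p : ℝ)) / p) * gk ^ (2 : ℕ))) := by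
          rw [show a^2 = (1 / H) ^ ((1 : ℝ) / p) * gk ^ ((1 - (p : ℝ)) / p) * (A + a) from haeq]
          ring
      _ = _ := by rw [h3]
  have hip : ⟪s, yk - xk1⟫ = gk * rk := by
    have hy : yk - xk1 = -(xk1 - yk) := by abel
    rw [hs, hy, inner_neg_neg, real_inner_smul_left, real_inner_self_eq_norm_sq, ← hrk_def,
      hgk_eq]
    rw [mul_assoc, mul_assoc, ← pow_add, ← pow_succ]
    congr 2
    omega
  -- inner product decompositions
  have e1 : ⟪s, xk - xk1⟫ = ⟪s, yk - xk1⟫ - τk * ⟪s, u⟫ := by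
    have : xk - xk1 = (yk - xk1) - τk • u := by rw [hyk_def]; abel
    rw [this, inner_sub_right, real_inner_smul_right]
  have e2 : ⟪s, vk - xk1⟫ = ⟪s, yk - xk1⟫ + (1 - τk) * ⟪s, u⟫ := by
    have : vk - xk1 = (yk - xk1) + (1 - τk) • u := by
      rw [hyk_def, hu_def]
      module
    rw [this, inner_add_right, real_inner_smul_right]
  have hτ1 : 0 ≤ (1 - τk) * ⟪s, u⟫ := by
    simpa using hτopt 1 ⟨zero_le_one, le_refl 1⟩
  have hτ0 : 0 ≤ -τk * ⟪s, u⟫ := by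
    simpa using hτopt 0 ⟨le_refl 0, zero_le_one⟩
  have hτA : 0 ≤ A * (-τk * ⟪s, u⟫) := mul_nonneg hA hτ0
  have hτa : 0 ≤ a * ((1 - τk) * ⟪s, u⟫) := mul_nonneg ha.le hτ1
  intro x
  rw [hΨk1 x]
  have I1 := hΨk x
  have I2 := grad_ineq_aux hf (hf' xk1) xk
  have I3 := hg xk
  have I4 := hg x
  have hadd1 : ⟪s, xk - xk1⟫ = ⟪f' xk1, xk - xk1⟫ + ⟪g, xk - xk1⟫ := by
    rw [hs_def]; exact inner_add_left _ _ _
  have hadd2 : ⟪s, x - xk1⟫ = ⟪f' xk1, x - xk1⟫ + ⟪g, x - xk1⟫ := by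
    rw [hs_def]; exact inner_add_left _ _ _
  have e3 : ⟪s, x - xk1⟫ = ⟪s, x - vk⟫ + ⟪s, vk - xk1⟫ := by
    have : x - xk1 = (x - vk) + (vk - xk1) := by abel
    rw [this, inner_add_right]
  -- main multiplied inequalities
  have J1 : A * (f xk1 + ψ xk1 + ⟪s, xk - xk1⟫) ≤ A * (f xk + ψ xk) :=
    mul_le_mul_of_nonneg_left (by linarith) hA
  have J2 : a * (f xk1 + ψ xk1 + ⟪s, x - xk1⟫) ≤
      a * (f xk1 + ⟪f' xk1, x - xk1⟫ + ψ x) :=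
    mul_le_mul_of_nonneg_left (by linarith) ha.le
  -- quadratic bound
  have hCS : -(gk * ‖x - vk‖) ≤ ⟪s, x - vk⟫ := by
    have h1 := abs_real_inner_le_norm s (x - vk)
    have h2 := neg_abs_le ⟪s, x - vk⟫
    rw [← hgk_def] at h1
    linarith
  have hquad : -(1 / 2) * (a ^ 2 * gk ^ 2) ≤ a * ⟪s, x - vk⟫ + (1 / 2) * ‖x - vk‖ ^ 2 := by
    nlinarith [sq_nonneg (‖x - vk‖ - a * gk), mul_le_mul_of_nonneg_left hCS ha.le]
  -- put everything together
  have hrw1 : A * ⟪s, xk - xk1⟫ =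
      A * ((1 / H) ^ ((1 : ℝ) / p) * gk ^ (((p : ℝ) + 1) / p)) + A * (-τk * ⟪s, u⟫) := by
    rw [e1, hip, hK1]; ring
  have hrw2 : a * ⟪s, x - xk1⟫ = a * ⟪s, x - vk⟫ +
      a * ((1 / H) ^ ((1 : ℝ) / p) * gk ^ (((p : ℝ) + 1) / p)) +
      a * ((1 - τk) * ⟪s, u⟫) := by
    rw [e3, e2, hip, hK1]; ring
  linarith [J1, J2, I1, hquad, hτA, hτa, hrw1, hrw2, hK2]
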